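/- Let G be a Δ-regular finite simple graph of order n ≥ 1. Then the unique real zero of the alliance polynomial A(G;x) is x = 0, and its multiplicity as a root is n − Δ. -/
import Mathlib


open Polynomial Finset

/-- Number of neighbors of `v` inside the set `S` (denoted δ_S(v)). -/
def SimpleGraph.degIn {V : Type*} [Fintype V] [DecidableEq V]
    (G : SimpleGraph V) [DecidableRel G.Adj] (S : Finset V) (v : V) : ℕ :=
  (S.filter (fun u => G.Adj v u)).card

/-- Number of neighbors of `v` outside the set `S` (denoted δ_{S̄}(v)). -/
def SimpleGraph.degOut {V : Type*} [Fintype V] [DecidableEq V]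
    (G : SimpleGraph V) [DecidableRel G.Adj] (S : Finset V) (v : V) : ℕ :=
  (Sᶜ.filter (fun u => G.Adj v u)).card

/-- `S` is an exact defensive `k`-alliance in `G`: the induced subgraph `⟨S⟩` is connected
(in particular `S` is nonempty) and `k = k_S = min_{v ∈ S} (δ_S(v) - δ_{S̄}(v))`. -/
def SimpleGraph.IsExactAlliance {V : Type*} [Fintype V] [DecidableEq V]
    (G : SimpleGraph V) [DecidableRel G.Adj] (S : Finset V) (k : ℤ) : Prop :=
  (G.induce (S : Set V)).Connected ∧
    (∀ v ∈ S, k ≤ (G.degIn S v : ℤ) - (G.degOut S v : ℤ)) ∧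
    (∃ v ∈ S, (G.degIn S v : ℤ) - (G.degOut S v : ℤ) = k)

/-- `A_k(G)`: the number of exact defensive `k`-alliances in `G`. -/
noncomputable def SimpleGraph.allianceCoeff {V : Type*} [Fintype V] [DecidableEq V]
    (G : SimpleGraph V) [DecidableRel G.Adj] (k : ℤ) : ℕ :=
  Set.ncard {S : Finset V | G.IsExactAlliance S k}

/-- The alliance polynomial `A(G;x) = Σ_{k=-Δ}^{Δ} A_k(G) x^{n+k}`, where `n` is the order and
`Δ` the maximum degree of `G`, regarded as a real polynomial. -/
noncomputable def SimpleGraph.alliancePoly {V : Type*} [Fintype V] [DecidableEq V]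
    (G : SimpleGraph V) [DecidableRel G.Adj] : Polynomial ℝ :=
  ∑ k ∈ Finset.Icc (-(G.maxDegree : ℤ)) (G.maxDegree : ℤ),
    (G.allianceCoeff k : ℝ) • X ^ (((Fintype.card V : ℤ) + k).toNat)


section Aux

variable {V : Type*} [Fintype V] [DecidableEq V]
  (G : SimpleGraph V) [DecidableRel G.Adj]

lemma degIn_add_degOut (S : Finset V) (v : V) :
    G.degIn S v + G.degOut S v = G.degree v := by
  classical
  unfold SimpleGraph.degIn SimpleGraph.degOut
  rw [← Finset.card_union_of_disjoint
      (Finset.disjoint_filter_filter disjoint_compl_right),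
    ← Finset.filter_union, Finset.union_compl, SimpleGraph.degree,
    SimpleGraph.neighborFinset_eq_filter]

lemma alliance_parity {Δ : ℕ} (hreg : G.IsRegularOfDegree Δ) {S : Finset V} {k : ℤ}
    (h : G.IsExactAlliance S k) : ∃ d : ℕ, k + Δ = 2 * d := by
  obtain ⟨-, -, v, hv, heq⟩ := h
  have hsum := degIn_add_degOut G S v
  rw [hreg v] at hsum
  exact ⟨G.degIn S v, by omega⟩

lemma singleton_alliance {Δ : ℕ} (hreg : G.IsRegularOfDegree Δ) (v : V) :
    G.IsExactAlliance {v} (-(Δ : ℤ)) := by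
  have hin : G.degIn {v} v = 0 := by
    simp [SimpleGraph.degIn, Finset.filter_singleton]
  have hout : G.degOut {v} v = Δ := by
    have : ({v}ᶜ : Finset V).filter (fun u => G.Adj v u)
        = Finset.univ.filter (fun u => G.Adj v u) := by
      ext u
      simp only [Finset.mem_filter, Finset.mem_compl, Finset.mem_singleton,
        Finset.mem_univ, true_and]
      exact ⟨fun h => h.2, fun h => ⟨fun he => G.irrefl (he ▸ h), h⟩⟩
    rw [SimpleGraph.degOut, this, ← SimpleGraph.neighborFinset_eq_filter]
    exact hreg v
  refine ⟨?_, ?_, v, Finset.mem_singleton_self v, by rw [hin, hout]; push_cast; ring⟩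
  · have hne : Nonempty ((({v} : Finset V) : Set V)) := ⟨⟨v, by simp⟩⟩
    exact ⟨fun a b => by
      have hab : a = b := by
        apply Subtype.ext
        have ha := a.2
        have hb := b.2
        simp only [Finset.coe_singleton, Set.mem_singleton_iff] at ha hb
        rw [ha, hb]
      exact hab ▸ SimpleGraph.Reachable.refl a⟩
  · intro u hu
    rw [Finset.mem_singleton] at hu
    subst hu
    rw [hin, hout]
    push_cast; omega

end Aux

/-- For a Δ-regular graph of order `n ≥ 1`, the unique real zero of `A(G;x)` is
`x = 0`, and its multiplicity as a root is `n - Δ`. -/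
theorem alliancePoly_real_zero
    {V : Type*} [Fintype V] [DecidableEq V] [Nonempty V]
    (G : SimpleGraph V) [DecidableRel G.Adj] (Δ : ℕ)
    (hreg : G.IsRegularOfDegree Δ) :
    (∀ x : ℝ, G.alliancePoly.eval x = 0 ↔ x = 0) ∧
    G.alliancePoly.rootMultiplicity 0 = Fintype.card V - Δ := by
  classical
  obtain ⟨v₀⟩ := ‹Nonempty V›
  set n := Fintype.card V with hn
  have hmax : G.maxDegree = Δ :=
    le_antisymm (G.maxDegree_le_of_forall_degree_le Δ fun v => (hreg v).le)
      ((hreg v₀) ▸ G.degree_le_maxDegree v₀)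
  have hΔn : Δ < n := (hreg v₀) ▸ G.degree_lt_card_verts v₀
  set m := n - Δ with hm
  have hm1 : 1 ≤ m := by omega
  -- the cofactor polynomial
  set Q : Polynomial ℝ := ∑ k ∈ Finset.Icc (-(Δ : ℤ)) (Δ : ℤ),
      (G.allianceCoeff k : ℝ) • X ^ ((k + Δ).toNat) with hQ
  have hfactor : G.alliancePoly = X ^ m * Q := by
    rw [hQ, SimpleGraph.alliancePoly, hmax, Finset.mul_sum]
    refine Finset.sum_congr rfl fun k hk => ?_
    rw [Finset.mem_Icc] at hk
    have he : ((n : ℤ) + k).toNat = m + (k + Δ).toNat := by omega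
    rw [he, pow_add, smul_eq_C_mul, smul_eq_C_mul]
    ring
  have hQpos : ∀ x : ℝ, 0 < Q.eval x := by
    intro x
    rw [hQ, Polynomial.eval_finset_sum]
    refine Finset.sum_pos' (fun k hk => ?_) ⟨-(Δ : ℤ), ?_, ?_⟩
    · simp only [Polynomial.eval_smul, smul_eq_mul, Polynomial.eval_pow,
        Polynomial.eval_X]
      by_cases hA : G.allianceCoeff k = 0
      · simp [hA]
      · have hne : {S : Finset V | G.IsExactAlliance S k}.Nonempty :=
          Set.nonempty_of_ncard_ne_zero hA
        obtain ⟨S, hS⟩ := hne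
        obtain ⟨d, hd⟩ := alliance_parity G hreg hS
        have hev : Even ((k + Δ).toNat) := by
          refine ⟨d, ?_⟩
          omega
        exact mul_nonneg (Nat.cast_nonneg _) (hev.pow_nonneg x)
    · rw [Finset.mem_Icc]
      constructor <;> omega
    · simp only [Polynomial.eval_smul, smul_eq_mul, Polynomial.eval_pow,
        Polynomial.eval_X]
      have h0 : ((-(Δ : ℤ) + Δ).toNat) = 0 := by omega
      rw [h0, pow_zero, mul_one]
      have : 0 < G.allianceCoeff (-(Δ : ℤ)) := by
        rw [SimpleGraph.allianceCoeff, Set.ncard_pos (Set.toFinite _)]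
        exact ⟨{v₀}, singleton_alliance G hreg v₀⟩
      exact_mod_cast this
  have hQ0 : Q ≠ 0 := fun h => by simpa [h] using hQpos 0
  constructor
  · intro x
    rw [hfactor, Polynomial.eval_mul, Polynomial.eval_pow, Polynomial.eval_X]
    constructor
    · intro h
      rcases mul_eq_zero.mp h with h | h
      · exact pow_eq_zero_iff (by omega) |>.mp h
      · exact absurd h (hQpos x).ne'
    · intro h; subst h; rw [zero_pow (by omega), zero_mul]
  · rw [hfactor, Polynomial.rootMultiplicity_mul
        (mul_ne_zero (pow_ne_zero m X_ne_zero) hQ0)]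
    have h1 : Polynomial.rootMultiplicity (0 : ℝ) Q = 0 :=
      Polynomial.rootMultiplicity_eq_zero (hQpos 0).ne'
    have h2 : Polynomial.rootMultiplicity (0 : ℝ) ((X : Polynomial ℝ) ^ m) = m := by
      have hx : (X : Polynomial ℝ) ^ m = (X - C 0) ^ m := by rw [map_zero, sub_zero]
      rw [hx, Polynomial.rootMultiplicity_X_sub_C_pow]
    rw [h1, h2, add_zero]
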